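/- There does not exist a computable functional unit for ℕ with exactly one method operation that is universal. -/
import Mathlib


/-- Primitive instructions: plain basic `f.m`, positive test `+f.m`, negative test `-f.m`
(method names are natural numbers, there is a single focus `f`), forward jump `#l`,
backward jump `\l`, and the positive/negative termination instructions `!t` / `!f`. -/
inductive Instr : Type where
  | basic (m : ℕ)
  | postest (m : ℕ)
  | negtest (m : ℕ)
  | fjump (l : ℕ)
  | bjump (l : ℕ)
  | haltT
  | haltF
deriving DecidableEq

/-- A functional unit for a state space `S`: a finite, functional set of
(method name, method operation) pairs, where a method operation is a total
function `S → Bool × S`. -/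
structure FU (S : Type*) where
  carrier : Set (ℕ × (S → Bool × S))
  finite : carrier.Finite
  functional : ∀ {m : ℕ} {M M' : S → Bool × S},
    (m, M) ∈ carrier → (m, M') ∈ carrier → M = M'

/-- The interface of a functional unit: the set of method names occurring in it. -/
def FU.iface {S : Type*} (H : FU S) : Set ℕ := {m | ∃ M, (m, M) ∈ H.carrier}

/-- The method operation named `m` in `H` (an arbitrary fixed value if `m ∉ I(H)`). -/
noncomputable def FU.op {S : Type*} (H : FU S) (m : ℕ) (s : S) : Bool × S :=
  letI := Classical.propDecidable
  if h : ∃ M, (m, M) ∈ H.carrier then h.choose s else (true, s)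

/-- The restriction `⟨I, H⟩` of a functional unit to a set `I` of method names. -/
def FU.restrict {S : Type*} (H : FU S) (I : Set ℕ) : FU S where
  carrier := {p ∈ H.carrier | p.1 ∈ I}
  finite := H.finite.subset (Set.sep_subset _ _)
  functional := fun hM hM' => H.functional hM.1 hM'.1

/-- The method names used by an instruction all belong to `I`. -/
def Instr.namesIn (I : Set ℕ) : Instr → Prop
  | .basic m => m ∈ I
  | .postest m => m ∈ I
  | .negtest m => m ∈ I
  | _ => True

/-- An instruction sequence over a set `I` of method names: a finite nonempty list of
primitive instructions whose method names belong to `I`. -/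
def InstrSeqOver (I : Set ℕ) (x : List Instr) : Prop :=
  x ≠ [] ∧ ∀ u ∈ x, u.namesIn I

/-- `Exec H x i s b s'` : execution of the instruction sequence `x` on the functional
unit `H`, from (0-based) position `i` in state `s`, terminates delivering the Boolean
value `b` with final state `s'`.  (Position `i` here corresponds to the 1-based
position `i+1`; positions outside the sequence, jumps `#0`/`\0`, and infinite
executions admit no derivation, i.e. execution does not terminate.) -/
inductive Exec {S : Type*} (H : FU S) (x : List Instr) : ℕ → S → Bool → S → Prop where
  | basic {i : ℕ} {s : S} {b : Bool} {s' : S} (m : ℕ)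
      (hu : x[i]? = some (Instr.basic m))
      (h : Exec H x (i + 1) (H.op m s).2 b s') : Exec H x i s b s'
  | posT {i : ℕ} {s : S} {b : Bool} {s' : S} (m : ℕ)
      (hu : x[i]? = some (Instr.postest m)) (hr : (H.op m s).1 = true)
      (h : Exec H x (i + 1) (H.op m s).2 b s') : Exec H x i s b s'
  | posF {i : ℕ} {s : S} {b : Bool} {s' : S} (m : ℕ)
      (hu : x[i]? = some (Instr.postest m)) (hr : (H.op m s).1 = false)
      (h : Exec H x (i + 2) (H.op m s).2 b s') : Exec H x i s b s'
  | negT {i : ℕ} {s : S} {b : Bool} {s' : S} (m : ℕ)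
      (hu : x[i]? = some (Instr.negtest m)) (hr : (H.op m s).1 = true)
      (h : Exec H x (i + 2) (H.op m s).2 b s') : Exec H x i s b s'
  | negF {i : ℕ} {s : S} {b : Bool} {s' : S} (m : ℕ)
      (hu : x[i]? = some (Instr.negtest m)) (hr : (H.op m s).1 = false)
      (h : Exec H x (i + 1) (H.op m s).2 b s') : Exec H x i s b s'
  | fjump {i : ℕ} {s : S} {b : Bool} {s' : S} (l : ℕ)
      (hu : x[i]? = some (Instr.fjump l))
      (h : Exec H x (i + l) s b s') : Exec H x i s b s'
  | bjump {i : ℕ} {s : S} {b : Bool} {s' : S} (l : ℕ)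
      (hu : x[i]? = some (Instr.bjump l)) (hl : l ≤ i)
      (h : Exec H x (i - l) s b s') : Exec H x i s b s'
  | haltT {i : ℕ} {s : S} (hu : x[i]? = some Instr.haltT) : Exec H x i s true s
  | haltF {i : ℕ} {s : S} (hu : x[i]? = some Instr.haltF) : Exec H x i s false s

/-- `M` is a derived method operation of `H`: there is an instruction sequence `x`
over `I(H)` whose produced partial method operation `⌈x⌉_H` is total and equals `M`. -/
def DerivedOp {S : Type*} (H : FU S) (M : S → Bool × S) : Prop :=
  ∃ x : List Instr, InstrSeqOver H.iface x ∧ ∀ s, Exec H x 0 s (M s).1 (M s).2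

/-- `H ≤ H'` : every method operation of `H` is a derived method operation of `H'`. -/
def FU.le {S : Type*} (H H' : FU S) : Prop :=
  ∀ m M, (m, M) ∈ H.carrier → DerivedOp H' M

/-- `H ≡ H'` : `H ≤ H'` and `H' ≤ H`. -/
def FU.equiv {S : Type*} (H H' : FU S) : Prop := FU.le H H' ∧ FU.le H' H

/-- A method operation on ℕ is computable if both its components are. -/
def ComputableMO (M : ℕ → Bool × ℕ) : Prop :=
  Computable (fun n => (M n).1) ∧ Computable (fun n => (M n).2)

/-- A functional unit for ℕ is computable if all its method operations are. -/
def ComputableFU (H : FU ℕ) : Prop :=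
  ∀ m M, (m, M) ∈ H.carrier → ComputableMO M

/-- If all method names occurring in `x` equal `m0`, then the final state of any
execution of `x` lies in the orbit of the start state under the state transformer
of the operation named `m0`. -/
private lemma exec_orbit {S : Type*} {H : FU S} {m0 : ℕ} {x : List Instr}
    (hx : ∀ u ∈ x, u.namesIn {m0}) :
    ∀ {i : ℕ} {s : S} {b : Bool} {s' : S}, Exec H x i s b s' →
      ∃ k, s' = (fun t => (H.op m0 t).2)^[k] s := by
  intro i s b s' h
  induction h with
  | basic m hu h ih =>
      have hm : m = m0 := hx _ (List.mem_of_getElem? hu)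
      obtain ⟨k, hk⟩ := ih
      exact ⟨k + 1, by subst hm; rw [Function.iterate_succ_apply]; exact hk⟩
  | posT m hu hr h ih =>
      have hm : m = m0 := hx _ (List.mem_of_getElem? hu)
      obtain ⟨k, hk⟩ := ih
      exact ⟨k + 1, by subst hm; rw [Function.iterate_succ_apply]; exact hk⟩
  | posF m hu hr h ih =>
      have hm : m = m0 := hx _ (List.mem_of_getElem? hu)
      obtain ⟨k, hk⟩ := ih
      exact ⟨k + 1, by subst hm; rw [Function.iterate_succ_apply]; exact hk⟩
  | negT m hu hr h ih =>
      have hm : m = m0 := hx _ (List.mem_of_getElem? hu)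
      obtain ⟨k, hk⟩ := ih
      exact ⟨k + 1, by subst hm; rw [Function.iterate_succ_apply]; exact hk⟩
  | negF m hu hr h ih =>
      have hm : m = m0 := hx _ (List.mem_of_getElem? hu)
      obtain ⟨k, hk⟩ := ih
      exact ⟨k + 1, by subst hm; rw [Function.iterate_succ_apply]; exact hk⟩
  | fjump l hu h ih => exact ih
  | bjump l hu hl h ih => exact ih
  | haltT hu => exact ⟨0, rfl⟩
  | haltF hu => exact ⟨0, rfl⟩

/-- There is no universal computable functional unit for ℕ with exactly one method
operation. -/
theorem no_universal_computable_fu_one :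
    ¬ ∃ H : FU ℕ, ComputableFU H ∧ H.carrier.ncard = 1 ∧
        ∀ L : FU ℕ, ComputableFU L → FU.le L H := by
  rintro ⟨H, hHc, hone, huniv⟩
  obtain ⟨p, hp⟩ := Set.ncard_eq_one.mp hone
  set e : ℕ → ℕ := fun t => (H.op p.1 t).2 with he
  have hif : H.iface = {p.1} := by
    ext m
    simp only [FU.iface, hp, Set.mem_setOf_eq, Set.mem_singleton_iff]
    constructor
    · rintro ⟨M, hM⟩
      exact congrArg Prod.fst hM
    · rintro rfl
      exact ⟨p.2, rfl⟩
  have key : ∀ m s : ℕ, ∃ k, m = e^[k] s := by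
    intro m s
    have hfun : ∀ {a : ℕ} {M M' : ℕ → Bool × ℕ},
        (a, M) ∈ ({((0 : ℕ), fun _ : ℕ => (true, m))} : Set (ℕ × (ℕ → Bool × ℕ))) →
        (a, M') ∈ ({((0 : ℕ), fun _ : ℕ => (true, m))} : Set (ℕ × (ℕ → Bool × ℕ))) →
        M = M' := by
      intro a M M' hM hM'
      simp only [Set.mem_singleton_iff, Prod.mk.injEq] at hM hM'
      rw [hM.2, hM'.2]
    set L : FU ℕ := ⟨{(0, fun _ => (true, m))}, Set.finite_singleton _, hfun⟩ with hL
    have hLc : ComputableFU L := by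
      intro a M hM
      simp only [hL, Set.mem_singleton_iff, Prod.mk.injEq] at hM
      rw [hM.2]
      exact ⟨Computable.const _, Computable.const _⟩
    obtain ⟨x, hxI, hxE⟩ := huniv L hLc 0 (fun _ => (true, m)) rfl
    have hnames : ∀ u ∈ x, u.namesIn {p.1} := by
      rw [← hif]; exact hxI.2
    exact exec_orbit hnames (hxE s)
  obtain ⟨k, hk⟩ := key 0 (e 0)
  have hper : Function.IsPeriodicPt e (k + 1) 0 := by
    show e^[k + 1] 0 = 0
    rw [Function.iterate_succ_apply]
    exact hk.symm
  have hall : ∀ m : ℕ, ∃ j < k + 1, e^[j] 0 = m := by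
    intro m
    obtain ⟨j, hj⟩ := key m 0
    exact ⟨j % (k + 1), Nat.mod_lt _ (Nat.succ_pos k), by
      rw [hper.iterate_mod_apply]; exact hj.symm⟩
  choose f hf hfe using hall
  haveI : Finite ℕ := Finite.of_injective (fun m => (⟨f m, hf m⟩ : Fin (k + 1)))
    (by
      intro a b hab
      have hfab : f a = f b := congrArg Fin.val hab
      rw [← hfe a, ← hfe b, hfab])
  exact not_finite ℕ
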